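/- Let q be a prime, n ≥ 1, and let F be the finite field with q^n elements, regarded as a vector space over its prime field 𝔽_q. Let p be a prime with p ≠ q, and let G be a nonabelian subgroup of the semilinear group Γ(q^n) such that: the only 𝔽_q-subspaces of F invariant under every element of G are 0 and F; the commutator subgroup of G is a p-group; the stabilizer in G of every nonzero v ∈ F is a p-group; and F ∖ {0} is the union of exactly two G-orbits. If ℓ is a primitive prime divisor of q^n − 1 that divides the order of G, then ℓ = p, the stabilizer in G of every nonzero v ∈ F is trivial (G acts fixed-point-freely on F ∖ {0}), and 2·|G| = q^n − 1. -/

import Mathlib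

/-- The multiplicative group structure on `AddAut A` (composition), as in the older Mathlib. -/
instance addAutOldGroup (A : Type*) [Add A] : Group (AddAut A) where
  mul g h := h.trans g
  one := AddEquiv.refl _
  inv := AddEquiv.symm
  mul_assoc _ _ _ := rfl
  one_mul _ := rfl
  mul_one _ := rfl
  inv_mul_cancel := AddEquiv.self_trans_symm

/-- The application action of `AddAut A` on `A`, as in the older Mathlib. -/
instance addAutOldMulAction (A : Type*) [AddMonoid A] : MulAction (AddAut A) A where
  smul f a := f a
  one_smul _ := rfl
  mul_smul _ _ _ := rfl

/-- The semilinear group `Γ(F)` of a field `F`: the subgroup of the additive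
automorphism group of `F` consisting of the maps `x ↦ a * σ x` with `a ∈ Fˣ` and `σ` a
field automorphism of `F`. -/
def semilinearGroup (F : Type*) [Field F] : Subgroup (AddAut F) where
  carrier := {f : AddAut F | ∃ (a : Fˣ) (σ : F ≃+* F), ∀ x : F, f x = a * σ x}
  one_mem' := ⟨1, RingEquiv.refl F, by simp; exact fun x => rfl⟩
  mul_mem' := by
    rintro f g ⟨a, σ, hf⟩ ⟨b, τ, hg⟩
    refine ⟨a * Units.map σ.toRingHom.toMonoidHom b, τ.trans σ, fun x => ?_⟩
    have : (f * g) x = f (g x) := rfl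
    rw [this, hg, hf]
    simp [mul_assoc]
  inv_mem' := by
    rintro f ⟨a, σ, hf⟩
    refine ⟨Units.map σ.symm.toRingHom.toMonoidHom a⁻¹, σ.symm, fun x => ?_⟩
    apply (f : F ≃+ F).injective
    have h1 : (f : F ≃+ F) ((f⁻¹ : AddAut F) x) = x := by
      exact f.apply_symm_apply x
    rw [h1, hf]
    simp


open Module
open scoped commutatorElement

section Helpers

lemma ppd_gt {q n ℓ : ℕ} (hq : q.Prime) (hn : 1 ≤ n) (hl : ℓ.Prime) (hldvd : ℓ ∣ q ^ n - 1)
    (hlppd : ∀ j : ℕ, 1 ≤ j → j < n → ¬ ℓ ∣ q ^ j - 1) : n < ℓ := by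
  have hq1 : 1 ≤ q ^ n := Nat.one_le_pow _ _ hq.pos
  have hlq : ℓ ≠ q := by
    rintro rfl
    have h1 : ℓ ∣ ℓ ^ n := dvd_pow_self ℓ (by omega)
    have h2 : ℓ ∣ ℓ ^ n - (ℓ ^ n - 1) := Nat.dvd_sub h1 hldvd
    rw [Nat.sub_sub_self hq1] at h2
    have := Nat.dvd_one.mp h2
    have := hl.one_lt
    omega
  have hcop : Nat.Coprime q ℓ := (Nat.coprime_primes hq hl).mpr (Ne.symm hlq)
  haveI : Fact ℓ.Prime := ⟨hl⟩
  set u : (ZMod ℓ)ˣ := ZMod.unitOfCoprime q hcop with hu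
  have hcast : ∀ m : ℕ, 1 ≤ m → (ℓ ∣ m - 1 ↔ (m : ZMod ℓ) = 1) := by
    intro m hm
    rw [← ZMod.natCast_eq_zero_iff]
    have h : m - 1 + 1 = m := Nat.sub_add_cancel hm
    have e : (m : ZMod ℓ) = ((m - 1 : ℕ) : ZMod ℓ) + 1 := by
      rw [← Nat.cast_one (R := ZMod ℓ), ← Nat.cast_add, h]
    constructor
    · intro h0; rw [e, h0, zero_add]
    · intro h0; rw [e] at h0; exact add_eq_right.mp h0
  have hun : u ^ n = 1 := by
    ext
    push_cast [hu]
    rw [ZMod.coe_unitOfCoprime, ← Nat.cast_pow]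
    exact (hcast _ hq1).mp hldvd
  have hdn : orderOf u ∣ n := orderOf_dvd_of_pow_eq_one hun
  have hd1 : 1 ≤ orderOf u := orderOf_pos u
  have hldvd' : ℓ ∣ q ^ orderOf u - 1 := by
    rw [hcast _ (Nat.one_le_pow _ _ hq.pos)]
    have h3 := pow_orderOf_eq_one u
    apply_fun (Units.val) at h3
    rw [Nat.cast_pow]
    rw [Units.val_pow_eq_pow_val, Units.val_one] at h3
    rw [hu, ZMod.coe_unitOfCoprime] at h3
    exact h3
  have hdeq : orderOf u = n := by
    rcases lt_or_eq_of_le (Nat.le_of_dvd (by omega) hdn) with h | h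
    · exact absurd hldvd' (hlppd _ hd1 h)
    · exact h
  have hdl : orderOf u ∣ ℓ - 1 := by
    have := orderOf_dvd_card (x := u)
    rwa [ZMod.card_units_eq_totient, Nat.totient_prime hl] at this
  have := Nat.le_of_dvd (Nat.sub_pos_of_lt hl.one_lt) hdl
  omega

lemma ringaut_eq_one_of_prime_pow {q n ℓ : ℕ} [Fact q.Prime] (hn : 1 ≤ n) (hl : ℓ.Prime)
    (hnl : n < ℓ) (σ : GaloisField q n ≃+* GaloisField q n) (hσ : σ ^ ℓ = 1) : σ = 1 := by
  have hq : q.Prime := Fact.out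
  haveI : Fact ℓ.Prime := ⟨hl⟩
  by_contra hne
  haveI : Finite (GaloisField q n ≃+* GaloisField q n) :=
    Finite.of_injective (fun e => (e : GaloisField q n → GaloisField q n)) DFunLike.coe_injective
  have hord : orderOf σ = ℓ := orderOf_eq_prime hσ hne
  set G₀ := Subgroup.zpowers σ with hG₀
  haveI : Fintype ↥G₀ := Fintype.ofFinite _
  letI : MulSemiringAction ↥G₀ (GaloisField q n) := MulSemiringAction.compHom _ G₀.subtype
  haveI : FaithfulSMul ↥G₀ (GaloisField q n) :=
    ⟨fun {g h} hgh => Subtype.ext (RingEquiv.ext fun x => hgh x)⟩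
  have hcardG : Fintype.card ↥G₀ = ℓ := by
    rw [← Nat.card_eq_fintype_card, Nat.card_zpowers, hord]
  set K := FixedPoints.subfield ↥G₀ (GaloisField q n)
  have hfr : finrank ↥K (GaloisField q n) = ℓ := by
    rw [@FixedPoints.finrank_eq_card ↥G₀ (GaloisField q n) _ _ _ _
      ⟨fun {g h} hgh => Subtype.ext (RingEquiv.ext fun x => hgh x)⟩, hcardG]
  haveI : Fintype (GaloisField q n) := Fintype.ofFinite _
  haveI : Fintype ↥K := Fintype.ofFinite _
  have hcard : Fintype.card (GaloisField q n) = Fintype.card ↥K ^ ℓ := by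
    rw [← hfr]; exact card_eq_pow_finrank
  have hcardF : Fintype.card (GaloisField q n) = q ^ n := by
    rw [← Nat.card_eq_fintype_card, GaloisField.card q n (by omega)]
  have hKdvd : Fintype.card ↥K ∣ q ^ n := by
    rw [← hcardF, hcard]
    exact dvd_pow_self _ (by omega)
  obtain ⟨m, hmn, hKm⟩ := (Nat.dvd_prime_pow hq).mp hKdvd
  have h2K : 2 ≤ Fintype.card ↥K := Fintype.one_lt_card
  have : q ^ n = q ^ (m * ℓ) := by rw [← hcardF, hcard, hKm, pow_mul]
  have hnml : n = m * ℓ := Nat.pow_right_injective hq.two_le this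
  have hm1 : 1 ≤ m := by
    rcases Nat.eq_zero_or_pos m with h | h
    · subst h; simp at hKm; omega
    · exact h
  nlinarith

lemma ringaut_eq_one_of_fix {q n ℓ : ℕ} [Fact q.Prime] (hn : 1 ≤ n) (hl : ℓ.Prime)
    (hlppd : ∀ j : ℕ, 1 ≤ j → j < n → ¬ ℓ ∣ q ^ j - 1)
    (σ : GaloisField q n ≃+* GaloisField q n) (lam : GaloisField q n)
    (hpow : lam ^ ℓ = 1) (hlam1 : lam ≠ 1) (hfix : σ lam = lam) : σ = 1 := by
  have hq : q.Prime := Fact.out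
  haveI : Fact ℓ.Prime := ⟨hl⟩
  by_contra hne
  have hex : ∃ x₀ : GaloisField q n, σ x₀ ≠ x₀ := by
    by_contra h
    push_neg at h
    exact hne (RingEquiv.ext h)
  obtain ⟨x₀, hx₀⟩ := hex
  set K := FixedBy.subfield (GaloisField q n) (σ : RingAut (GaloisField q n)) with hK
  have hmem : ∀ x : GaloisField q n, x ∈ K ↔ σ x = x := fun x => Iff.rfl
  have hlamK : lam ∈ K := (hmem lam).mpr hfix
  have hx₀K : x₀ ∉ K := fun h => hx₀ ((hmem x₀).mp h)
  haveI : Fintype (GaloisField q n) := Fintype.ofFinite _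
  haveI : Fintype ↥K := Fintype.ofFinite _
  have hlt : Fintype.card ↥K < Fintype.card (GaloisField q n) := by
    apply Fintype.card_lt_of_injective_of_notMem
      (fun x : ↥K => (x : GaloisField q n)) Subtype.coe_injective (b := x₀)
    rintro ⟨y, hy⟩
    exact hx₀K (hy ▸ y.2)
  have hcard : Fintype.card (GaloisField q n)
      = Fintype.card ↥K ^ finrank ↥K (GaloisField q n) := card_eq_pow_finrank
  have hcardF : Fintype.card (GaloisField q n) = q ^ n := by
    rw [← Nat.card_eq_fintype_card, GaloisField.card q n (by omega)]
  have hKdvd : Fintype.card ↥K ∣ q ^ n := by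
    have hr : 1 ≤ finrank ↥K (GaloisField q n) := by
      rcases Nat.eq_zero_or_pos (finrank ↥K (GaloisField q n)) with h | h
      · rw [h, pow_zero] at hcard
        have := Fintype.one_lt_card (α := GaloisField q n); omega
      · exact h
    rw [← hcardF, hcard]
    exact dvd_pow_self _ (by omega)
  obtain ⟨m, hmn, hKm⟩ := (Nat.dvd_prime_pow hq).mp hKdvd
  have h2K : 2 ≤ Fintype.card ↥K := Fintype.one_lt_card
  have hmlt : m < n := by
    have h5 := hlt
    rw [hKm, hcardF] at h5
    exact (Nat.pow_lt_pow_iff_right hq.one_lt).mp h5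
  have hm1 : 1 ≤ m := by
    rcases Nat.eq_zero_or_pos m with h | h
    · subst h; simp at hKm; omega
    · exact h
  have hlam0 : lam ≠ 0 := by
    intro h; rw [h] at hpow; simp [zero_pow hl.pos.ne'] at hpow
  set lam' : ↥K := ⟨lam, hlamK⟩ with hlam'
  have hlam'pow : lam' ^ ℓ = 1 := by
    ext; push_cast [hlam']; exact hpow
  have hlam'ne : lam' ≠ 1 := fun h => hlam1 (congrArg Subtype.val h)
  have hordlam : orderOf lam' = ℓ := orderOf_eq_prime hlam'pow hlam'ne
  have hlam'0 : lam' ≠ 0 := fun h => hlam0 (congrArg Subtype.val h)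
  have hdvd : ℓ ∣ Fintype.card ↥K - 1 := by
    rw [← hordlam]
    exact orderOf_dvd_of_pow_eq_one (FiniteField.pow_card_sub_one_eq_one lam' hlam'0)
  rw [hKm] at hdvd
  exact hlppd m hm1 hmlt hdvd

lemma scalar_of_pow {q n ℓ : ℕ} [Fact q.Prime] (hn : 1 ≤ n) (hl : ℓ.Prime) (hnl : n < ℓ)
    (g : AddAut (GaloisField q n)) (a : (GaloisField q n)ˣ)
    (σ : GaloisField q n ≃+* GaloisField q n)
    (hdec : ∀ x, g x = a * σ x) (hgl : g ^ ℓ = 1) :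
    ∀ x, g x = g 1 * x := by
  have mulσ : ∀ (α β : RingAut (GaloisField q n)) x, (α * β) x = α (β x) := fun _ _ _ => rfl
  have oneσ : ∀ x : GaloisField q n, (1 : RingAut (GaloisField q n)) x = x := fun _ => rfl
  have oneg : ∀ x : GaloisField q n, (1 : AddAut (GaloisField q n)) x = x := fun _ => rfl
  have mulg : ∀ (α β : AddAut (GaloisField q n)) x, (α * β) x = α (β x) := fun _ _ _ => rfl
  have hk : ∀ (k : ℕ) (x : GaloisField q n), (g ^ k) x = ((g ^ k) 1) * (σ ^ k) x := by
    intro k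
    induction k with
    | zero => intro x; simp only [pow_zero]; rw [oneg, oneg 1, oneσ, one_mul]
    | succ k ih =>
      have key : ∀ x, (g ^ (k+1)) x
          = ((g ^ k) 1) * (σ ^ k) (a : GaloisField q n) * (σ ^ (k+1)) x := by
        intro x
        rw [pow_succ, mulg, ih (g x), hdec, map_mul, pow_succ, mulσ, mul_assoc]
      intro x
      rw [key x, key 1]
      simp [mul_assoc]
  have hσℓ : σ ^ ℓ = 1 := by
    apply RingEquiv.ext
    intro x
    have := hk ℓ x
    rw [hgl] at this
    simpa [oneg, oneσ] using this.symm
  have : σ = 1 := ringaut_eq_one_of_prime_pow hn hl hnl σ hσℓ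
  subst this
  intro x
  rw [hdec x, hdec 1]
  simp [oneσ]

end Helpers


/-- Let `G` be a nonabelian irreducible subgroup of the semilinear group of `F = 𝔽_{q^n}`
whose commutator subgroup and point stabilizers are `p`-groups (`p ≠ q`), such that the
nonzero vectors form exactly two `G`-orbits.  If `ℓ` is a primitive prime divisor of
`q ^ n - 1` dividing `|G|`, then `ℓ = p`, `G` acts fixed-point-freely on the nonzero
vectors, and `2 |G| = q ^ n - 1`. -/
theorem semilinear_two_orbits_ppd_divides (q n p ℓ : ℕ) [Fact q.Prime] (hn : 1 ≤ n)
    (hp : p.Prime) (hpq : p ≠ q)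
    (G : Subgroup (AddAut (GaloisField q n))) (hG : G ≤ semilinearGroup (GaloisField q n))
    (hna : ∃ a b : ↥G, a * b ≠ b * a)
    (hirr : ∀ W : Submodule (ZMod q) (GaloisField q n),
      (∀ g ∈ G, ∀ x ∈ W, g x ∈ W) → W = ⊥ ∨ W = ⊤)
    (hcomm : IsPGroup p ↥(commutator ↥G))
    (hstab : ∀ v : GaloisField q n, v ≠ 0 →
      IsPGroup p ↥(G ⊓ MulAction.stabilizer (AddAut (GaloisField q n)) v))
    (horb : ∃ u w : GaloisField q n, u ≠ 0 ∧ w ≠ 0 ∧ (¬ ∃ g ∈ G, g u = w) ∧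
      ∀ x : GaloisField q n, x ≠ 0 → (∃ g ∈ G, g u = x) ∨ (∃ g ∈ G, g w = x))
    (hl : ℓ.Prime) (hldvd : ℓ ∣ q ^ n - 1)
    (hlppd : ∀ j : ℕ, 1 ≤ j → j < n → ¬ ℓ ∣ q ^ j - 1)
    (hlG : ℓ ∣ Nat.card ↥G) :
    ℓ = p ∧
      (∀ v : GaloisField q n, v ≠ 0 →
        G ⊓ MulAction.stabilizer (AddAut (GaloisField q n)) v = ⊥) ∧
      2 * Nat.card ↥G = q ^ n - 1 := by
  classical
  have hq : q.Prime := Fact.out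
  haveI : Fact ℓ.Prime := ⟨hl⟩
  have hnl : n < ℓ := ppd_gt hq hn hl hldvd hlppd
  haveI : Finite (AddAut (GaloisField q n)) :=
    Finite.of_injective (fun e : AddAut (GaloisField q n) =>
      (e : GaloisField q n → GaloisField q n)) DFunLike.coe_injective
  haveI : Fintype ↥G := Fintype.ofFinite _
  have oneg : ∀ x : GaloisField q n, (1 : AddAut (GaloisField q n)) x = x := fun _ => rfl
  have mulg : ∀ (α β : AddAut (GaloisField q n)) x, (α * β) x = α (β x) := fun _ _ _ => rfl
  have invg : ∀ (α : AddAut (GaloisField q n)) x, α⁻¹ (α x) = x := fun α x => by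
    rw [← mulg, inv_mul_cancel, oneg]
  have invg' : ∀ (α : AddAut (GaloisField q n)) x, α (α⁻¹ x) = x := fun α x => by
    rw [← mulg, mul_inv_cancel, oneg]
  have hsmul : ∀ (g : AddAut (GaloisField q n)) x, g • x = g x := fun _ _ => rfl
  -- Cauchy: an element of order ℓ
  obtain ⟨z₀, hz₀⟩ : ∃ z : ↥G, orderOf z = ℓ := by
    apply exists_prime_orderOf_dvd_card ℓ
    rw [← Nat.card_eq_fintype_card]
    exact hlG
  have hzG : (z₀ : AddAut (GaloisField q n)) ∈ G := z₀.2
  set z : AddAut (GaloisField q n) := ↑z₀ with hz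
  have hzl : z ^ ℓ = 1 := by
    have h1 : z₀ ^ ℓ = 1 := by rw [← hz₀]; exact pow_orderOf_eq_one z₀
    have := congrArg (Subtype.val) h1
    simpa [hz] using this
  have hzne : z ≠ 1 := by
    intro h
    have : z₀ = 1 := Subtype.ext h
    rw [this, orderOf_one] at hz₀
    exact hl.one_lt.ne' hz₀.symm
  obtain ⟨az, σz, hzdec⟩ := hG hzG
  have hzscal : ∀ x, z x = z 1 * x := scalar_of_pow hn hl hnl z az σz hzdec hzl
  set lam := z 1 with hlamdef
  have hzpow : ∀ (k : ℕ) x, (z ^ k) x = lam ^ k * x := by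
    intro k
    induction k with
    | zero => intro x; simp only [pow_zero]; rw [oneg, one_mul]
    | succ k ih => intro x; rw [pow_succ, mulg, ih (z x), hzscal x, pow_succ]; ring
  have hlaml : lam ^ ℓ = 1 := by
    have := hzpow ℓ 1
    rw [hzl, oneg, mul_one] at this
    exact this.symm
  have hlamne : lam ≠ 1 := by
    intro h
    apply hzne
    apply DFunLike.ext
    intro x
    rw [hzscal x, h, one_mul, oneg]
  have hlam0 : lam ≠ 0 := by
    intro h; rw [h] at hlaml; simp [zero_pow hl.pos.ne'] at hlaml
  have hzinv : ∀ x, z⁻¹ x = lam⁻¹ * x := by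
    intro x
    have h1 : z (lam⁻¹ * x) = x := by
      rw [hzscal, ← mul_assoc, mul_inv_cancel₀ hlam0, one_mul]
    have h2 := invg z (lam⁻¹ * x)
    rw [h1] at h2
    exact h2
  -- Step 1 : ℓ = p
  have hlp : ℓ = p := by
    by_contra hlp
    have hscal : ∀ g ∈ G, ∀ x : GaloisField q n, g x = g 1 * x := by
      intro g hgG
      obtain ⟨a, σ, hdec⟩ := hG hgG
      set cg : ↥G := ⁅(⟨g, hgG⟩ : ↥G), z₀⁆ with hcgdef
      have hcmem : cg ∈ commutator ↥G :=
        Subgroup.commutator_mem_commutator (Subgroup.mem_top _) (Subgroup.mem_top _)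
      set μ : GaloisField q n := σ lam * lam⁻¹ with hμ
      have hc : ∀ x, (cg : AddAut (GaloisField q n)) x = μ * x := by
        intro x
        have h1 : (cg : AddAut (GaloisField q n)) = g * z * g⁻¹ * z⁻¹ := rfl
        rw [h1, mulg, mulg, mulg, hzinv x, hzscal (g⁻¹ (lam⁻¹ * x)), hdec, map_mul,
          mul_left_comm (a : GaloisField q n) (σ lam), ← hdec, invg' g, hμ, mul_assoc]
      have hμl : μ ^ ℓ = 1 := by
        rw [hμ, mul_pow, ← map_pow, hlaml, map_one, one_mul, inv_pow, hlaml, inv_one]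
      have hck : ∀ (k : ℕ) x, ((cg : AddAut (GaloisField q n)) ^ k) x = μ ^ k * x := by
        intro k
        induction k with
        | zero => intro x; simp only [pow_zero]; rw [oneg, one_mul]
        | succ k ih =>
          intro x
          rw [pow_succ, mulg, ih ((cg : AddAut (GaloisField q n)) x), hc x, pow_succ]; ring
      have hcl : cg ^ ℓ = 1 := by
        apply Subtype.val_injective
        rw [SubmonoidClass.coe_pow]
        apply DFunLike.ext
        intro x
        rw [hck ℓ x, hμl, one_mul]
        exact (oneg x).symm
      obtain ⟨k, hk2⟩ := hcomm ⟨cg, hcmem⟩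
      have hcpk : cg ^ (p ^ k) = 1 := by
        have := congrArg (Subtype.val) hk2
        simpa using this
      have hcop : Nat.Coprime ℓ (p ^ k) :=
        (((Nat.coprime_primes hl hp).mpr hlp)).pow_right k
      have hdvd1 : orderOf cg ∣ ℓ := orderOf_dvd_of_pow_eq_one hcl
      have hdvd2 : orderOf cg ∣ p ^ k := orderOf_dvd_of_pow_eq_one hcpk
      have hord1 : orderOf cg = 1 := Nat.eq_one_of_dvd_coprimes hcop hdvd1 hdvd2
      have hcg1 : cg = 1 := orderOf_eq_one_iff.mp hord1
      have hμ1 : μ = 1 := by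
        have := hc 1
        rw [hcg1, mul_one] at this
        rw [← this]
        exact (oneg 1)
      have hfix : σ lam = lam := by
        rw [hμ] at hμ1
        exact (mul_inv_eq_one₀ hlam0).mp hμ1
      have hσ1 : σ = 1 := ringaut_eq_one_of_fix hn hl hlppd σ lam hlaml hlamne hfix
      subst hσ1
      intro x
      rw [hdec x, hdec 1]
      have : (1 : RingAut (GaloisField q n)) x = x := rfl
      have h2 : (1 : RingAut (GaloisField q n)) (1 : GaloisField q n) = 1 := rfl
      rw [this, h2, mul_one]
    obtain ⟨A, B, hAB⟩ := hna
    apply hAB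
    apply Subtype.ext
    apply DFunLike.ext
    intro x
    have h1 : ((A * B : ↥G) : AddAut (GaloisField q n)) x
        = (A : AddAut (GaloisField q n)) ((B : AddAut (GaloisField q n)) x) := by
      rw [Subgroup.coe_mul, mulg]
    have h2 : ((B * A : ↥G) : AddAut (GaloisField q n)) x
        = (B : AddAut (GaloisField q n)) ((A : AddAut (GaloisField q n)) x) := by
      rw [Subgroup.coe_mul, mulg]
    rw [h1, h2, hscal _ A.2 ((B : AddAut (GaloisField q n)) x), hscal _ B.2 x,
      hscal _ B.2 ((A : AddAut (GaloisField q n)) x), hscal _ A.2 x]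
    ring
  -- Step 2 : stabilizers are trivial
  have goal2 : ∀ v : GaloisField q n, v ≠ 0 →
      G ⊓ MulAction.stabilizer (AddAut (GaloisField q n)) v = ⊥ := by
    intro v hv
    rw [Subgroup.eq_bot_iff_forall]
    intro s hs
    by_contra hsne
    obtain ⟨k, hk⟩ := hstab v hv ⟨s, hs⟩
    have hspk : s ^ (p ^ k) = 1 := by
      have := congrArg (Subtype.val) hk
      simpa using this
    obtain ⟨j, hj_le, hj⟩ := (Nat.dvd_prime_pow hp).mp (orderOf_dvd_of_pow_eq_one hspk)
    have hj1 : 1 ≤ j := by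
      rcases Nat.eq_zero_or_pos j with h | h
      · subst h
        rw [pow_zero] at hj
        exact absurd (orderOf_eq_one_iff.mp hj) hsne
      · exact h
    set t : AddAut (GaloisField q n) := s ^ (p ^ (j - 1)) with htdef
    have htp : t ^ p = 1 := by
      rw [htdef, ← pow_mul, ← pow_succ, Nat.sub_add_cancel hj1, ← hj]
      exact pow_orderOf_eq_one s
    have htne : t ≠ 1 := by
      intro h
      have h2 : orderOf s ∣ p ^ (j - 1) := orderOf_dvd_of_pow_eq_one h
      rw [hj] at h2
      have := (Nat.pow_dvd_pow_iff_le_right hp.one_lt).mp h2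
      omega
    have htl : t ^ ℓ = 1 := by rw [hlp]; exact htp
    have htG : t ∈ G := Subgroup.pow_mem G hs.1 _
    obtain ⟨a, σ, hdec⟩ := hG htG
    have htscal : ∀ x, t x = t 1 * x := scalar_of_pow hn hl hnl t a σ hdec htl
    have htv : t v = v := by
      have h3 : t ∈ MulAction.stabilizer (AddAut (GaloisField q n)) v :=
        Subgroup.pow_mem _ hs.2 _
      have := MulAction.mem_stabilizer_iff.mp h3
      rwa [hsmul] at this
    have ht1 : t 1 = 1 := by
      have h4 : t 1 * v = 1 * v := by rw [one_mul, ← htscal v, htv]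
      exact mul_right_cancel₀ hv h4
    apply htne
    apply DFunLike.ext
    intro x
    rw [htscal x, ht1, one_mul, oneg]
  refine ⟨hlp, goal2, ?_⟩
  -- Step 3 : counting
  obtain ⟨u, w, hu, hw, hnoo, hcover⟩ := horb
  set f1 : ↥G → GaloisField q n := fun g => (g : AddAut (GaloisField q n)) u with hf1
  set f2 : ↥G → GaloisField q n := fun g => (g : AddAut (GaloisField q n)) w with hf2
  have inj : ∀ (v : GaloisField q n), v ≠ 0 → Function.Injective
      (fun g : ↥G => (g : AddAut (GaloisField q n)) v) := by
    intro v hv g h hgh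
    simp only at hgh
    have h5 : ((h⁻¹ * g : ↥G) : AddAut (GaloisField q n)) v = v := by
      rw [Subgroup.coe_mul, mulg, hgh]
      exact invg _ _
    have hmem : ((h⁻¹ * g : ↥G) : AddAut (GaloisField q n))
        ∈ G ⊓ MulAction.stabilizer (AddAut (GaloisField q n)) v := by
      exact Subgroup.mem_inf.mpr ⟨(h⁻¹ * g).2,
        MulAction.mem_stabilizer_iff.mpr (by rw [hsmul]; exact h5)⟩
    rw [goal2 v hv, Subgroup.mem_bot] at hmem
    have : h⁻¹ * g = 1 := by exact_mod_cast Subtype.ext hmem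
    exact (inv_mul_eq_one.mp this).symm
  have hne0 : ∀ (v : GaloisField q n) (g : ↥G), v ≠ 0 →
      (g : AddAut (GaloisField q n)) v ≠ 0 := by
    intro v g hv h
    apply hv
    have : (g : AddAut (GaloisField q n)) v = (g : AddAut (GaloisField q n)) 0 := by
      rw [h, map_zero]
    exact (EquivLike.injective (g : AddAut (GaloisField q n))) this
  have hdisj : Disjoint (Set.range f1) (Set.range f2) := by
    rw [Set.disjoint_left]
    rintro x ⟨g, rfl⟩ ⟨h, hh⟩
    apply hnoo
    refine ⟨((h⁻¹ * g : ↥G) : AddAut (GaloisField q n)), (h⁻¹ * g).2, ?_⟩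
    rw [Subgroup.coe_mul, mulg]
    rw [hf1] at *
    simp only at hh ⊢
    rw [← hh]
    exact invg _ _
  have hunion : Set.range f1 ∪ Set.range f2 = {x : GaloisField q n | x ≠ 0} := by
    apply Set.eq_of_subset_of_subset
    · rintro x (⟨g, rfl⟩ | ⟨g, rfl⟩)
      · exact hne0 u g hu
      · exact hne0 w g hw
    · intro x hx
      rcases hcover x hx with ⟨g, hgG, hgx⟩ | ⟨g, hgG, hgx⟩
      · exact Or.inl ⟨⟨g, hgG⟩, hgx⟩
      · exact Or.inr ⟨⟨g, hgG⟩, hgx⟩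
  have hc1 : (Set.range f1).ncard = Nat.card ↥G := by
    rw [← Nat.card_coe_set_eq]
    exact Nat.card_range_of_injective (inj u hu)
  have hc2 : (Set.range f2).ncard = Nat.card ↥G := by
    rw [← Nat.card_coe_set_eq]
    exact Nat.card_range_of_injective (inj w hw)
  have hctot : ({x : GaloisField q n | x ≠ 0}).ncard = q ^ n - 1 := by
    have h6 : {x : GaloisField q n | x ≠ 0} = Set.univ \ {0} := by
      ext x; simp
    rw [h6, Set.ncard_diff (Set.subset_univ _), Set.ncard_univ, Set.ncard_singleton,
      GaloisField.card q n (by omega)]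
  have := Set.ncard_union_eq hdisj
  rw [hunion, hctot, hc1, hc2] at this
  omega
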